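/- Let κ ∈ ℝ with κ ≠ 0, λ > 0, and let x_l < x_r be real numbers. Suppose u : ℝ → ℝ is twice continuously differentiable on [x_l, x_r], satisfies 1 + κ·(u'(x))² > 0 and −u''(x) = λ·u(x)·(1 + κ·(u'(x))²)^(3/2) for all x ∈ [x_l, x_r], with u(x_l) = u(x_r) = 0 and u(x) > 0 for all x ∈ (x_l, x_r). Then: (i) u is symmetric about the midpoint, i.e. u(x_l + x_r − x) = u(x) for all x ∈ [x_l, x_r]; (ii) u' is strictly decreasing on [x_l, x_r]; and (iii) u'(m) = 0 where m = (x_l + x_r)/2, and m is the only zero of u' in [x_l, x_r]. -/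

import Mathlib

open Set Real Filter

noncomputable section

/-- `u` is twice continuously differentiable on `[a,b]`, satisfies
`1 + κ (u')² > 0` and the ODE `-u'' = λ u (1 + κ (u')²)^(3/2)` on `[a,b]`. -/
def SolODE (κ lam : ℝ) (u : ℝ → ℝ) (a b : ℝ) : Prop :=
  (∀ x ∈ Set.Icc a b, DifferentiableAt ℝ u x) ∧
  (∀ x ∈ Set.Icc a b, DifferentiableAt ℝ (deriv u) x) ∧
  ContinuousOn (deriv (deriv u)) (Set.Icc a b) ∧
  (∀ x ∈ Set.Icc a b, 0 < 1 + κ * (deriv u x) ^ 2) ∧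
  (∀ x ∈ Set.Icc a b,
    -(deriv (deriv u) x) = lam * u x * (1 + κ * (deriv u x) ^ 2) ^ ((3 : ℝ) / 2))

/-- `u` is a solution of problem (P) on `[0,1]` with Dirichlet boundary conditions. -/
def SolP (κ lam : ℝ) (u : ℝ → ℝ) : Prop :=
  SolODE κ lam u 0 1 ∧ u 0 = 0 ∧ u 1 = 0

/-- `u` is an `S⁺ₙ`-solution of problem (P): a nontrivial solution with exactly
`n - 1` zeros in `(0,1)`, all zeros in `[0,1]` simple, and positive near `0`. -/
def SPlus (κ lam : ℝ) (n : ℕ) (u : ℝ → ℝ) : Prop :=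
  SolP κ lam u ∧
  (∃ x ∈ Set.Icc (0 : ℝ) 1, u x ≠ 0) ∧
  {x ∈ Set.Ioo (0 : ℝ) 1 | u x = 0}.ncard = n - 1 ∧
  (∀ τ ∈ Set.Icc (0 : ℝ) 1, u τ = 0 → deriv u τ ≠ 0) ∧
  (∃ δ > 0, ∀ x ∈ Set.Ioo (0 : ℝ) δ, 0 < u x)

/-- The constant `B = ∫₀¹ dθ/√(θ⁻⁴ - 1)`. -/
def Bconst : ℝ := ∫ θ in (0 : ℝ)..1, 1 / Real.sqrt ((θ ^ 4)⁻¹ - 1)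

/-- The sup-norm of `u` over `[0,1]`. -/
def supNorm (u : ℝ → ℝ) : ℝ := sSup ((fun x => |u x|) '' Set.Icc (0 : ℝ) 1)

/-- The time map `J(λ, ξ) = √(-κ) ∫₀¹ ξ/√(1 - (1 - λκξ²(1-θ²)/2)⁻²) dθ`. -/
def Jmap (κ lam ξ : ℝ) : ℝ :=
  Real.sqrt (-κ) *
    ∫ θ in (0 : ℝ)..1,
      ξ / Real.sqrt (1 - ((1 - lam * κ / 2 * ξ ^ 2 * (1 - θ ^ 2))⁻¹) ^ 2)

set_option maxHeartbeats 1600000 in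
theorem stmt3 (κ lam xl xr : ℝ) (hκ : κ ≠ 0) (hlam : 0 < lam) (hx : xl < xr)
    (u : ℝ → ℝ) (hu : SolODE κ lam u xl xr) (hl : u xl = 0) (hr : u xr = 0)
    (hpos : ∀ x ∈ Set.Ioo xl xr, 0 < u x) :
    (∀ x ∈ Set.Icc xl xr, u (xl + xr - x) = u x) ∧
    StrictAntiOn (deriv u) (Set.Icc xl xr) ∧
    deriv u ((xl + xr) / 2) = 0 ∧
    (∀ x ∈ Set.Icc xl xr, deriv u x = 0 → x = (xl + xr) / 2) := by
  obtain ⟨hd1, hd2, hc2, hκp, hode⟩ := hu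
  have hucont : ContinuousOn u (Icc xl xr) :=
    fun x hx => (hd1 x hx).continuousAt.continuousWithinAt
  have hu'cont : ContinuousOn (deriv u) (Icc xl xr) :=
    fun x hx => (hd2 x hx).continuousAt.continuousWithinAt
  have hode' : ∀ x ∈ Icc xl xr,
      deriv (deriv u) x = -(lam * u x * (1 + κ * (deriv u x) ^ 2) ^ ((3:ℝ)/2)) :=
    fun x hx => by linarith [hode x hx]
  have hu''neg : ∀ x ∈ Ioo xl xr, deriv (deriv u) x < 0 := by
    intro x hx
    have hmem : x ∈ Icc xl xr := Ioo_subset_Icc_self hx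
    rw [hode' x hmem]
    have h1 := Real.rpow_pos_of_pos (hκp x hmem) ((3:ℝ)/2)
    have h2 := hpos x hx
    have := mul_pos (mul_pos hlam h2) h1
    linarith
  have hanti : StrictAntiOn (deriv u) (Icc xl xr) := by
    apply strictAntiOn_of_deriv_neg (convex_Icc xl xr) hu'cont
    intro x hx
    rw [interior_Icc] at hx
    exact hu''neg x hx
  -- endpoint derivative signs
  set m0 : ℝ := (xl + xr) / 2 with hm0def
  have hm0 : m0 ∈ Ioo xl xr := ⟨by simp only [hm0def]; linarith, by simp only [hm0def]; linarith⟩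
  have hdl : 0 < deriv u xl := by
    by_contra h
    push_neg at h
    obtain ⟨cc, hcc, hslope⟩ := exists_deriv_eq_slope u hm0.1
      (hucont.mono (Icc_subset_Icc le_rfl hm0.2.le))
      (fun x hx => (hd1 x ⟨hx.1.le, le_trans hx.2.le hm0.2.le⟩).differentiableWithinAt)
    have hccK : cc ∈ Icc xl xr := ⟨hcc.1.le, le_trans hcc.2.le hm0.2.le⟩
    have h1 : deriv u cc < deriv u xl := hanti ⟨le_rfl, hx.le⟩ hccK hcc.1
    have h2 : 0 < (u m0 - u xl) / (m0 - xl) := by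
      apply div_pos
      · have := hpos m0 hm0; linarith [hl]
      · linarith [hm0.1]
    linarith [hslope ▸ h2]
  have hdr : deriv u xr < 0 := by
    by_contra h
    push_neg at h
    obtain ⟨cc, hcc, hslope⟩ := exists_deriv_eq_slope u hm0.2
      (hucont.mono (Icc_subset_Icc hm0.1.le le_rfl))
      (fun x hx => (hd1 x ⟨le_trans hm0.1.le hx.1.le, hx.2.le⟩).differentiableWithinAt)
    have hccK : cc ∈ Icc xl xr := ⟨le_trans hm0.1.le hcc.1.le, hcc.2.le⟩
    have h1 : deriv u xr < deriv u cc := hanti hccK ⟨hx.le, le_rfl⟩ hcc.2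
    have h2 : (u xr - u m0) / (xr - m0) < 0 := by
      apply div_neg_of_neg_of_pos
      · have := hpos m0 hm0; linarith [hr]
      · linarith [hm0.2]
    linarith [hslope ▸ h2]
  -- zero of the derivative
  obtain ⟨c, hcmem, hc0⟩ := intermediate_value_Ioo' hx.le hu'cont (⟨hdr, hdl⟩ : (0:ℝ) ∈ Ioo (deriv u xr) (deriv u xl))
  have hcK : c ∈ Icc xl xr := Ioo_subset_Icc_self hcmem
  -- bounds on u and deriv u
  obtain ⟨t1, ht1K, ht1⟩ := isCompact_Icc.exists_isMaxOn (nonempty_Icc.2 hx.le) hucont.abs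
  obtain ⟨t2, ht2K, ht2⟩ := isCompact_Icc.exists_isMaxOn (nonempty_Icc.2 hx.le) hu'cont.abs
  set R : ℝ := |u t1| with hRdef
  set R' : ℝ := |deriv u t2| with hR'def
  have hbu : ∀ t ∈ Icc xl xr, |u t| ≤ R := fun t ht => ht1 ht
  have hbu' : ∀ t ∈ Icc xl xr, |deriv u t| ≤ R' := fun t ht => ht2 ht
  set sset : Set (ℝ × ℝ) := Icc (-R) R ×ˢ Icc (-R') R' with hssetdef
  set U : Set (ℝ × ℝ) := {p : ℝ × ℝ | 0 < 1 + κ * p.2 ^ 2} with hUdef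
  have hssub : sset ⊆ U := by
    rintro ⟨p1, p2⟩ ⟨h1, h2⟩
    simp only [hUdef, Set.mem_setOf_eq]
    rcases le_or_gt 0 κ with hk | hk
    · nlinarith [sq_nonneg p2]
    · have h2' : p2 ^ 2 ≤ R' ^ 2 := sq_le_sq' h2.1 h2.2
      have hp2 := hκp t2 ht2K
      have hsq : R' ^ 2 = (deriv u t2) ^ 2 := sq_abs _
      nlinarith
  set vf : ℝ × ℝ → ℝ × ℝ := fun p => (p.2, -(lam * p.1 * (1 + κ * p.2 ^ 2) ^ ((3:ℝ)/2))) with hvfdef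
  have hvfC1 : ∀ p ∈ U, ContDiffAt ℝ 1 vf p := by
    intro p hp
    apply ContDiffAt.prodMk
    · exact contDiffAt_snd
    · apply ContDiffAt.neg
      apply ContDiffAt.mul
      · exact contDiffAt_const.mul contDiffAt_fst
      · exact ContDiffAt.rpow_const_of_ne
          (contDiffAt_const.add (contDiffAt_const.mul (contDiffAt_snd.pow 2)))
          (ne_of_gt hp)
  have hUopen : IsOpen U := by
    have hcont : Continuous fun p : ℝ × ℝ => 1 + κ * p.2 ^ 2 := by continuity
    exact isOpen_lt continuous_const hcont
  have hvfC1' : ContDiffOn ℝ 1 vf U := fun p hp => (hvfC1 p hp).contDiffWithinAt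
  have hfderivcont : ContinuousOn (fderiv ℝ vf) U :=
    hvfC1'.continuousOn_fderiv_of_isOpen hUopen le_rfl
  have hsc : IsCompact sset := isCompact_Icc.prod isCompact_Icc
  obtain ⟨C, hC⟩ := hsc.exists_bound_of_continuousOn (hfderivcont.mono hssub)
  set Knn : NNReal := ⟨max C 0, le_max_right _ _⟩ with hKnndef
  have hlip : LipschitzOnWith Knn vf sset := by
    apply Convex.lipschitzOnWith_of_nnnorm_fderiv_le (𝕜 := ℝ)
    · intro x hxs
      exact ((hvfC1 x (hssub hxs)).differentiableAt one_ne_zero)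
    · intro x hxs
      rw [← NNReal.coe_le_coe]
      simp only [coe_nnnorm, hKnndef, NNReal.coe_mk]
      exact le_max_of_le_left (hC x hxs)
    · exact (convex_Icc _ _).prod (convex_Icc _ _)
  -- the symmetry lemma via ODE uniqueness
  have key : ∀ a b : ℝ, xl ≤ a → b ≤ xr → a + b = 2 * c → a < c → c < b →
      ∀ t ∈ Icc a b, u (2 * c - t) = u t := by
    intro a b ha hb hab hac hcb
    have hsub2 : Icc a b ⊆ Icc xl xr := Icc_subset_Icc ha hb
    have hreflK : ∀ t ∈ Icc a b, 2 * c - t ∈ Icc xl xr := by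
      intro t ht
      constructor
      · linarith [ht.2]
      · linarith [ht.1]
    set F : ℝ → ℝ × ℝ := fun t => (u t, deriv u t) with hFdef
    set G : ℝ → ℝ × ℝ := fun t => (u (2 * c - t), -(deriv u (2 * c - t))) with hGdef
    have hreflcont : ContinuousOn (fun t : ℝ => 2 * c - t) (Icc a b) :=
      (continuous_const.sub continuous_id).continuousOn
    have hreflmap : MapsTo (fun t : ℝ => 2 * c - t) (Icc a b) (Icc xl xr) := hreflK
    have hFcont : ContinuousOn F (Icc a b) :=
      ((hucont.mono hsub2).prodMk (hu'cont.mono hsub2))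
    have hGcont : ContinuousOn G (Icc a b) :=
      ((hucont.comp hreflcont hreflmap).prodMk ((hu'cont.comp hreflcont hreflmap).neg))
    have hFderiv : ∀ t ∈ Ioo a b, HasDerivAt F (vf (F t)) t := by
      intro t ht
      have htK : t ∈ Icc xl xr := hsub2 (Ioo_subset_Icc_self ht)
      have h1 : HasDerivAt u (deriv u t) t := (hd1 t htK).hasDerivAt
      have h2 : HasDerivAt (deriv u) (deriv (deriv u) t) t := (hd2 t htK).hasDerivAt
      have := h1.prodMk h2
      have hveq : vf (F t) = (deriv u t, deriv (deriv u) t) := by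
        simp only [hvfdef, hFdef, hode' t htK]
      rw [hveq]
      exact this
    have hGderiv : ∀ t ∈ Ioo a b, HasDerivAt G (vf (G t)) t := by
      intro t ht
      have htK : 2 * c - t ∈ Icc xl xr := hreflK t (Ioo_subset_Icc_self ht)
      have hrefl : HasDerivAt (fun t : ℝ => 2 * c - t) (-1) t := by
        simpa using (hasDerivAt_id t).const_sub (2 * c)
      have h1 : HasDerivAt (fun t : ℝ => u (2 * c - t)) (deriv u (2 * c - t) * (-1)) t :=
        HasDerivAt.comp t ((hd1 _ htK).hasDerivAt) hrefl
      have h2 : HasDerivAt (fun t : ℝ => deriv u (2 * c - t))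
          (deriv (deriv u) (2 * c - t) * (-1)) t :=
        HasDerivAt.comp t ((hd2 _ htK).hasDerivAt) hrefl
      have := h1.prodMk h2.neg
      have hveq : vf (G t) = (deriv u (2 * c - t) * (-1), -(deriv (deriv u) (2 * c - t) * (-1))) := by
        simp only [hvfdef, hGdef, neg_sq]
        rw [hode' _ htK, Prod.mk.injEq]
        constructor <;> ring
      rw [hveq]
      exact this
    have hFmem : ∀ t ∈ Ioo a b, F t ∈ sset := by
      intro t ht
      have htK : t ∈ Icc xl xr := hsub2 (Ioo_subset_Icc_self ht)
      simp only [hFdef, hssetdef, Set.mem_prod, Set.mem_Icc]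
      exact ⟨abs_le.mp (hbu t htK), abs_le.mp (hbu' t htK)⟩
    have hGmem : ∀ t ∈ Ioo a b, G t ∈ sset := by
      intro t ht
      have htK : 2 * c - t ∈ Icc xl xr := hreflK t (Ioo_subset_Icc_self ht)
      have h1 := abs_le.mp (hbu _ htK)
      have h2 := abs_le.mp (hbu' _ htK)
      simp only [hGdef, hssetdef, Set.mem_prod, Set.mem_Icc]
      exact ⟨h1, ⟨by linarith [h2.2], by linarith [h2.1]⟩⟩
    have heq : F c = G c := by
      simp only [hFdef, hGdef]
      rw [show 2 * c - c = c by ring, hc0]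
      norm_num
    have hFG : EqOn F G (Icc a b) :=
      ODE_solution_unique_of_mem_Icc (v := fun _ => vf) (s := fun _ => sset)
        (fun _ _ => hlip) ⟨hac, hcb⟩ hFcont hFderiv hFmem hGcont hGderiv hGmem heq
    intro t ht
    have h := hFG ht
    exact (congrArg Prod.fst h).symm
  -- c is the midpoint
  have hcm : c = m0 := by
    by_contra hne
    rcases lt_or_gt_of_ne hne with hlt | hgt
    · have hlt' : 2 * c < xl + xr := by simp only [hm0def] at hlt; linarith
      have h1 : 2 * c - xl ≤ xr := by linarith
      have h2 := key xl (2 * c - xl) le_rfl h1 (by ring) hcmem.1 (by linarith [hcmem.1])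
        xl ⟨le_rfl, by linarith [hcmem.1]⟩
      have h3 : 2 * c - xl ∈ Ioo xl xr := ⟨by linarith [hcmem.1], by linarith⟩
      have := hpos _ h3
      rw [h2, hl] at this
      exact lt_irrefl 0 this
    · have hgt' : xl + xr < 2 * c := by simp only [hm0def] at hgt; linarith
      have h1 : xl ≤ 2 * c - xr := by linarith
      have h2 := key (2 * c - xr) xr h1 le_rfl (by ring) (by linarith [hcmem.2]) hcmem.2
        xr ⟨by linarith [hcmem.2], le_rfl⟩
      have h3 : 2 * c - xr ∈ Ioo xl xr := ⟨by linarith, by linarith [hcmem.2]⟩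
      have := hpos _ h3
      rw [h2, hr] at this
      exact lt_irrefl 0 this
  refine ⟨?_, hanti, ?_, ?_⟩
  · intro x hxm
    have h := key xl xr le_rfl le_rfl (by rw [hcm, hm0def]; ring) hcmem.1 hcmem.2 x hxm
    rw [show 2 * c - x = xl + xr - x by rw [hcm, hm0def]; ring] at h
    exact h
  · show deriv u m0 = 0
    rw [← hcm]
    exact hc0
  · intro x hxm h0
    have hmK : m0 ∈ Icc xl xr := Ioo_subset_Icc_self hm0
    show x = m0
    exact hanti.injOn hxm hmK (by rw [h0, ← hcm, hc0])
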